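/- The marginal probabilities of the Projection DPP are the leverage scores: if X ∈ R^{n×d} has full column rank and S is drawn with Pr{S} ∝ det(X_S)^2 over size-d subsets, then Pr{i ∈ S} = x_i^T (X^T X)^{-1} x_i for each i. -/

import Mathlib

open Matrix

open Finset Equiv


lemma det_mul_expand {d n : ℕ} (A : Matrix (Fin d) (Fin n) ℝ) (B : Matrix (Fin n) (Fin d) ℝ) :
    (A * B).det = ∑ p : Fin d → Fin n, (A.submatrix id p).det * ∏ i, B (p i) i := by
  simp only [det_apply', mul_apply, prod_univ_sum, mul_sum, Fintype.piFinset_univ]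
  rw [Finset.sum_comm]
  refine Finset.sum_congr rfl fun p _ => ?_
  rw [Finset.sum_mul]
  refine Finset.sum_congr rfl fun σ _ => ?_
  simp only [submatrix_apply, id, Finset.prod_mul_distrib]
  ring

lemma det_submatrix_zero_of_not_inj {d n : ℕ} (A : Matrix (Fin d) (Fin n) ℝ)
    {p : Fin d → Fin n} (hp : ¬ Function.Injective p) : (A.submatrix id p).det = 0 := by
  rw [Function.not_injective_iff] at hp
  obtain ⟨a, b, hab, hne⟩ := hp
  exact det_zero_of_column_eq hne (fun k => by simp [submatrix_apply, hab])

lemma fiber_sum {d n : ℕ} (S : Finset (Fin n)) (h : S.card = d)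
    (F : (Fin d → Fin n) → ℝ) :
    ∑ p ∈ (Finset.univ.filter fun p : Fin d → Fin n =>
        Function.Injective p ∧ Finset.image p Finset.univ = S), F p
      = ∑ σ : Equiv.Perm (Fin d), F (fun x => S.orderEmbOfFin h (σ x)) := by
  refine Finset.sum_bij' (fun p hp => ?_) (fun σ _ => fun x => S.orderEmbOfFin h (σ x))
      ?_ ?_ ?_ ?_ ?_
  · -- forward map: p ↦ σ
    simp only [Finset.mem_filter] at hp
    exact Equiv.ofBijective
      (fun x => (S.orderIsoOfFin h).symm ⟨p x, by
        rw [← hp.2.2]; exact Finset.mem_image_of_mem p (Finset.mem_univ x)⟩)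
      ((Finite.injective_iff_bijective).mp (fun a b hab => hp.2.1 (by
        have := congrArg (fun z => ((S.orderIsoOfFin h) z : Fin n)) hab
        simpa using this)))
  · intro a ha; exact Finset.mem_univ _
  · intro σ _
    simp only [Finset.mem_filter, Finset.mem_univ, true_and]
    constructor
    · exact fun a b hab => σ.injective ((S.orderEmbOfFin h).injective hab)
    · ext y
      simp only [Finset.mem_image, Finset.mem_univ, true_and]
      constructor
      · rintro ⟨x, rfl⟩; exact S.orderEmbOfFin_mem h _
      · intro hy
        refine ⟨σ.symm ((S.orderIsoOfFin h).symm ⟨y, hy⟩), ?_⟩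
        simp [Finset.orderEmbOfFin, ← Finset.coe_orderIsoOfFin_apply]
  · intro p hp
    funext x
    simp [← Finset.coe_orderIsoOfFin_apply]
  · intro σ _
    refine Equiv.ext fun x => ?_
    apply (S.orderEmbOfFin h).injective
    simp only [Equiv.ofBijective_apply]
    rw [← Finset.coe_orderIsoOfFin_apply]
    simp
  · intro p hp
    simp only [Finset.mem_filter] at hp
    congr 1
    funext x
    simp [← Finset.coe_orderIsoOfFin_apply]

lemma cauchyBinet {d n : ℕ} (A : Matrix (Fin d) (Fin n) ℝ) (B : Matrix (Fin n) (Fin d) ℝ) :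
    (A * B).det = ∑ S ∈ (Finset.powersetCard d (Finset.univ : Finset (Fin n))).attach,
      (A.submatrix id (fun i => S.1.orderEmbOfFin (Finset.mem_powersetCard.mp S.2).2 i)).det *
      (B.submatrix (fun i => S.1.orderEmbOfFin (Finset.mem_powersetCard.mp S.2).2 i) id).det := by
  set F : (Fin d → Fin n) → ℝ := fun p => (A.submatrix id p).det * ∏ i, B (p i) i with hF
  have h1 : (A * B).det = ∑ p ∈ Finset.univ.filter (fun p : Fin d → Fin n =>
      Function.Injective p), F p := by
    rw [det_mul_expand]
    rw [← Finset.sum_filter_of_ne (p := fun p : Fin d → Fin n => Function.Injective p)]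
    intro p _ hne
    by_contra hp
    exact hne (by simp [hF, det_submatrix_zero_of_not_inj A hp] : F p = 0)
  have h2 : ∀ (S : Finset (Fin n)) (h : S.card = d),
      ∑ σ : Equiv.Perm (Fin d), F (fun x => S.orderEmbOfFin h (σ x))
        = (A.submatrix id (fun i => S.orderEmbOfFin h i)).det *
          (B.submatrix (fun i => S.orderEmbOfFin h i) id).det := by
    intro S h
    have : ∀ σ : Equiv.Perm (Fin d), F (fun x => S.orderEmbOfFin h (σ x))
        = Equiv.Perm.sign σ • ((A.submatrix id (fun i => S.orderEmbOfFin h i)).det *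
            ∏ x, (B.submatrix (fun i => S.orderEmbOfFin h i) id) (σ x) x) := by
      intro σ
      have hsub : (A.submatrix id fun x => S.orderEmbOfFin h (σ x))
          = (A.submatrix id (fun i => S.orderEmbOfFin h i)).submatrix id σ := by
        ext a b; simp
      simp only [hF, hsub, det_permute']
      simp only [submatrix_apply, id, Units.smul_def, zsmul_eq_mul]
      push_cast
      ring
    rw [Finset.sum_congr rfl fun σ _ => this σ]
    conv_rhs => rw [det_apply (B.submatrix (fun i => S.orderEmbOfFin h i) id)]
    rw [Finset.mul_sum]
    refine Finset.sum_congr rfl fun σ _ => ?_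
    simp only [Units.smul_def, zsmul_eq_mul]
    push_cast
    ring
  rw [h1, ← Finset.sum_fiberwise_of_maps_to (g := fun p : Fin d → Fin n =>
      Finset.image p Finset.univ) (t := Finset.powersetCard d (Finset.univ : Finset (Fin n)))
      (fun p hp => ?_) F]
  · rw [← Finset.sum_attach (Finset.powersetCard d (Finset.univ : Finset (Fin n)))
      (fun S => ∑ p ∈ (Finset.univ.filter (fun p : Fin d → Fin n => Function.Injective p)).filter
        (fun p => Finset.image p Finset.univ = S), F p)]
    refine Finset.sum_congr rfl fun S _ => ?_
    rw [Finset.filter_filter, fiber_sum S.1 (Finset.mem_powersetCard.mp S.2).2 F,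
      h2 S.1 (Finset.mem_powersetCard.mp S.2).2]
  · simp only [Finset.mem_filter] at hp
    rw [Finset.mem_powersetCard]
    exact ⟨Finset.subset_univ _, by rw [Finset.card_image_of_injective _ hp.2, Finset.card_univ,
      Fintype.card_fin]⟩

lemma isUnit_det_of_rank_eq {d : ℕ} (M : Matrix (Fin d) (Fin d) ℝ) (h : M.rank = d) :
    IsUnit M.det := by
  rw [← Matrix.isUnit_iff_isUnit_det]
  rw [← Matrix.mulVec_injective_iff_isUnit]
  have hr : LinearMap.range M.mulVecLin = ⊤ := by
    apply Submodule.eq_top_of_finrank_eq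
    rw [← Matrix.rank, h]
    simp [Module.finrank_pi]
  have hsurj : Function.Surjective M.mulVecLin := LinearMap.range_eq_top.mp hr
  have hinj : Function.Injective M.mulVecLin :=
    (LinearMap.injective_iff_surjective).mpr hsurj
  exact hinj

/-- The `d × d` submatrix of rows of `X` indexed by a subset `S` of size `d`. -/
noncomputable def rowSub {n d : ℕ} (X : Matrix (Fin n) (Fin d) ℝ) (S : Finset (Fin n))
    (h : S.card = d) : Matrix (Fin d) (Fin d) ℝ :=
  X.submatrix (fun i => S.orderEmbOfFin h i) id

lemma det_updateRow_sub {n d : ℕ} (X : Matrix (Fin n) (Fin d) ℝ) (i : Fin n)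
    (S : Finset (Fin n)) (h : S.card = d) :
    ((X.updateRow i ((2 : ℝ) • X i)).submatrix (fun j => S.orderEmbOfFin h j) id).det
      = (if i ∈ S then 2 else 1) * (X.submatrix (fun j => S.orderEmbOfFin h j) id).det := by
  by_cases hi : i ∈ S
  · obtain ⟨j₀, hj₀⟩ : ∃ j₀, S.orderEmbOfFin h j₀ = i := by
      have := Finset.range_orderEmbOfFin S h
      have : i ∈ Set.range (S.orderEmbOfFin h) := by rw [this]; exact_mod_cast hi
      exact this
    have key : (X.updateRow i ((2 : ℝ) • X i)).submatrix (fun j => S.orderEmbOfFin h j) id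
        = (X.submatrix (fun j => S.orderEmbOfFin h j) id).updateRow j₀
            ((2 : ℝ) • fun b => X i b) := by
      ext a b
      by_cases ha : a = j₀
      · subst ha; simp [hj₀, Matrix.updateRow_apply, Pi.smul_apply]
      · have hne : S.orderEmbOfFin h a ≠ i := fun hc => ha
          ((S.orderEmbOfFin h).injective (hc.trans hj₀.symm))
        simp [Matrix.updateRow_apply, ha, hne]
    rw [key, if_pos hi, Matrix.det_updateRow_smul]
    have : (X.submatrix (fun j => S.orderEmbOfFin h j) id).updateRow j₀ (fun b => X i b)
        = X.submatrix (fun j => S.orderEmbOfFin h j) id := by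
      have hrow : (fun b => X i b) = X.submatrix (fun j => S.orderEmbOfFin h j) id j₀ := by
        funext b; simp [hj₀]
      rw [hrow, Matrix.updateRow_eq_self]
    rw [this]
  · have key : (X.updateRow i ((2 : ℝ) • X i)).submatrix (fun j => S.orderEmbOfFin h j) id
        = X.submatrix (fun j => S.orderEmbOfFin h j) id := by
      ext a b
      have hne : S.orderEmbOfFin h a ≠ i := fun hc => hi (hc ▸ S.orderEmbOfFin_mem h a)
      simp [Matrix.updateRow_apply, hne]
    rw [key, if_neg hi, one_mul]

/-- The marginals of the Projection DPP are the leverage scores: if `X` has full column rank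
and `Pr{S} = det(X_S)²/det(XᵀX)` over size-`d` subsets, then
`Pr{i ∈ S} = xᵢᵀ (XᵀX)⁻¹ xᵢ`. -/
theorem projection_dpp_marginals {n d : ℕ} (X : Matrix (Fin n) (Fin d) ℝ)
    (hrank : X.rank = d) (i : Fin n) :
    ∑ S ∈ (Finset.powersetCard d (Finset.univ : Finset (Fin n))).attach,
      (if i ∈ S.1 then
        (rowSub X S.1 (Finset.mem_powersetCard.mp S.2).2).det ^ 2 / (Xᵀ * X).det
      else 0)
      = X i ⬝ᵥ ((Xᵀ * X)⁻¹ *ᵥ X i) := by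
  classical
  have hGdet : IsUnit (Xᵀ * X).det := by
    apply isUnit_det_of_rank_eq
    rw [Matrix.rank_transpose_mul_self, hrank]
  set B := X.updateRow i ((2 : ℝ) • X i) with hB
  have hXB : Xᵀ * B = Xᵀ * X + Matrix.replicateCol (Fin 1) (X i) * Matrix.replicateRow (Fin 1) (X i) := by
    ext a b
    have hBk : ∀ k, B k b = X k b + if k = i then X i b else 0 := by
      intro k
      by_cases hk : k = i
      · subst hk; simp [hB]; ring
      · simp [hB, Matrix.updateRow_apply, hk]
    simp only [Matrix.mul_apply, Matrix.add_apply, Matrix.transpose_apply, hBk, mul_add,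
      Finset.sum_add_distrib, mul_ite, mul_zero, Finset.sum_ite_eq', Finset.mem_univ, if_true]
    congr 1
    simp [Matrix.mul_apply, Fin.sum_univ_one]
  have hdet1 : (Xᵀ * B).det = (Xᵀ * X).det * (1 + X i ⬝ᵥ ((Xᵀ * X)⁻¹ *ᵥ X i)) := by
    rw [hXB]; refine (Matrix.det_add_replicateCol_mul_replicateRow (ι := Fin 1) hGdet (X i) (X i)).trans ?_
    simp only [Matrix.det_unique]
    congr 1
    simp only [Matrix.add_apply, Matrix.one_apply_eq, Matrix.mul_apply, Matrix.replicateRow_apply,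
      Matrix.replicateCol_apply, dotProduct, Matrix.mulVec, Fin.sum_univ_one]
    congr 1
    simp only [Finset.sum_mul, Finset.mul_sum]
    rw [Finset.sum_comm]
    exact Finset.sum_congr rfl fun a _ => Finset.sum_congr rfl fun b _ => by ring
  have hCB1 : (Xᵀ * X).det = ∑ S ∈ (Finset.powersetCard d (Finset.univ : Finset (Fin n))).attach,
      (rowSub X S.1 (Finset.mem_powersetCard.mp S.2).2).det ^ 2 := by
    rw [cauchyBinet Xᵀ X]
    refine Finset.sum_congr rfl fun S _ => ?_
    rw [← Matrix.transpose_submatrix, Matrix.det_transpose, sq]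
    rfl
  have hCB2 : (Xᵀ * B).det = ∑ S ∈ (Finset.powersetCard d (Finset.univ : Finset (Fin n))).attach,
      ((rowSub X S.1 (Finset.mem_powersetCard.mp S.2).2).det ^ 2
        + if i ∈ S.1 then (rowSub X S.1 (Finset.mem_powersetCard.mp S.2).2).det ^ 2 else 0) := by
    rw [cauchyBinet Xᵀ B]
    refine Finset.sum_congr rfl fun S _ => ?_
    rw [← Matrix.transpose_submatrix, Matrix.det_transpose,
      det_updateRow_sub X i S.1 (Finset.mem_powersetCard.mp S.2).2]
    by_cases hi : i ∈ S.1 <;> simp [hi, rowSub, sq] <;> ring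
  have hkey : ∑ S ∈ (Finset.powersetCard d (Finset.univ : Finset (Fin n))).attach,
      (if i ∈ S.1 then (rowSub X S.1 (Finset.mem_powersetCard.mp S.2).2).det ^ 2 else 0)
      = (Xᵀ * X).det * (X i ⬝ᵥ ((Xᵀ * X)⁻¹ *ᵥ X i)) := by
    have h := hdet1
    rw [hCB2, Finset.sum_add_distrib, ← hCB1] at h
    linarith [h]
  have hne : (Xᵀ * X).det ≠ 0 := hGdet.ne_zero
  calc ∑ S ∈ (Finset.powersetCard d (Finset.univ : Finset (Fin n))).attach,
      (if i ∈ S.1 then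
        (rowSub X S.1 (Finset.mem_powersetCard.mp S.2).2).det ^ 2 / (Xᵀ * X).det
      else 0)
      = (∑ S ∈ (Finset.powersetCard d (Finset.univ : Finset (Fin n))).attach,
          (if i ∈ S.1 then (rowSub X S.1 (Finset.mem_powersetCard.mp S.2).2).det ^ 2 else 0))
          / (Xᵀ * X).det := by
        rw [Finset.sum_div]
        refine Finset.sum_congr rfl fun S _ => ?_
        by_cases hi : i ∈ S.1 <;> simp [hi]
    _ = X i ⬝ᵥ ((Xᵀ * X)⁻¹ *ᵥ X i) := by
        rw [hkey, mul_div_assoc]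
        field_simp
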